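/- Let L be a real n×n matrix, c > 0, τ > 0, and η ≥ 0. Suppose the semigroup generated by -L is a contraction with rate c in the sup-norm, i.e., for every t ≥ 0 and every vector v ∈ ℝⁿ, max_i |(exp(-t·L)·v)_i| ≤ e^{-ct}·max_i |v_i|. Let Q, N ∈ ℝⁿ satisfy max_i |Q_i| ≤ η and max_i |N_i| ≤ c·η. Then the ETD1 update Q' := exp(-τ·L)·Q + ∫₀^τ exp(-(τ-s)·L)·N ds satisfies max_i |Q'_i| ≤ η. -/

import Mathlib

open Matrix

/-- Single-step maximum-bound-principle preservation (Theorem 11 of the paper): if the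
semigroup generated by `-L` contracts the sup norm at rate `c`, `‖Q‖ ≤ η` and
`‖N‖ ≤ c η`, then the ETD1 update
`Q' = e^{-τL} Q + ∫₀^τ e^{-(τ-s)L} N ds` satisfies `‖Q'‖ ≤ η`.
The norm on `Fin n → ℝ` is the sup norm. -/
theorem stmt14 {n : ℕ} (L : Matrix (Fin n) (Fin n) ℝ) (c τ η : ℝ)
    (hc : 0 < c) (hτ : 0 < τ) (hη : 0 ≤ η)
    (hcontr : ∀ t : ℝ, 0 ≤ t → ∀ v : Fin n → ℝ,
      ‖(NormedSpace.exp (-(t • L))).mulVec v‖ ≤ Real.exp (-c * t) * ‖v‖)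
    (Q N : Fin n → ℝ) (hQ : ‖Q‖ ≤ η) (hN : ‖N‖ ≤ c * η) :
    ‖(NormedSpace.exp (-(τ • L))).mulVec Q
        + ∫ s in (0 : ℝ)..τ, (NormedSpace.exp (-((τ - s) • L))).mulVec N‖
      ≤ η := by
  set g : ℝ → ℝ := fun s => Real.exp (-c * (τ - s)) * (c * η) with hg
  have hgcont : Continuous g := by fun_prop
  -- bound the first term
  have h1 : ‖(NormedSpace.exp (-(τ • L))).mulVec Q‖ ≤ Real.exp (-c * τ) * η :=
    (hcontr τ hτ.le Q).trans (by
      exact mul_le_mul_of_nonneg_left hQ (Real.exp_pos _).le)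
  -- bound the integral term
  have h2 : ‖∫ s in (0 : ℝ)..τ, (NormedSpace.exp (-((τ - s) • L))).mulVec N‖
      ≤ |∫ s in (0 : ℝ)..τ, g s| := by
    apply intervalIntegral.norm_integral_le_abs_of_norm_le
    · filter_upwards [MeasureTheory.ae_restrict_mem measurableSet_Ioc] with s hs
      have hs0 : 0 ≤ τ - s := by
        rw [Set.uIoc_of_le hτ.le] at hs
        linarith [hs.2]
      calc ‖(NormedSpace.exp (-((τ - s) • L))).mulVec N‖
          ≤ Real.exp (-c * (τ - s)) * ‖N‖ := hcontr _ hs0 N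
        _ ≤ g s := mul_le_mul_of_nonneg_left hN (Real.exp_pos _).le
    · exact hgcont.intervalIntegrable _ _
  -- compute the integral of g
  have h3 : (∫ s in (0 : ℝ)..τ, g s) = η * (1 - Real.exp (-c * τ)) := by
    have hderiv : ∀ s ∈ Set.uIcc (0 : ℝ) τ,
        HasDerivAt (fun s => η * Real.exp (-c * (τ - s))) (g s) s := by
      intro s _
      have h : HasDerivAt (fun s : ℝ => -c * (τ - s)) c s := by
        have := ((hasDerivAt_id s).const_sub τ).const_mul (-c)
        simpa using this
      have := (h.exp.const_mul η)
      refine this.congr_deriv ?_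
      show _ = Real.exp (-c * (τ - s)) * (c * η)
      ring
    have := intervalIntegral.integral_eq_sub_of_hasDerivAt hderiv
      (hgcont.intervalIntegrable _ _)
    rw [this]
    simp
    ring
  have h2' : ‖∫ s in (0 : ℝ)..τ, (NormedSpace.exp (-((τ - s) • L))).mulVec N‖
      ≤ η * (1 - Real.exp (-c * τ)) := by
    rw [h3] at h2
    refine h2.trans (le_of_eq (abs_of_nonneg ?_))
    have : Real.exp (-c * τ) ≤ 1 := by
      apply Real.exp_le_one_iff.mpr
      nlinarith
    nlinarith
  calc ‖(NormedSpace.exp (-(τ • L))).mulVec Q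
        + ∫ s in (0 : ℝ)..τ, (NormedSpace.exp (-((τ - s) • L))).mulVec N‖
      ≤ ‖(NormedSpace.exp (-(τ • L))).mulVec Q‖
        + ‖∫ s in (0 : ℝ)..τ, (NormedSpace.exp (-((τ - s) • L))).mulVec N‖ :=
        norm_add_le _ _
    _ ≤ Real.exp (-c * τ) * η + η * (1 - Real.exp (-c * τ)) := add_le_add h1 h2'
    _ = η := by ring
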